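/- Let n ≥ 2 and let B ∈ ℝ^{n+1} be a unit vector with first entry b, and let u* = (u_{*0}; u_{*1}) ∈ bd K_{n+1} with u_{*0} > 0. Assume Bᵀ û* = 0 and 2b² < 1 (so that H ∩ bd K_{n+1} = {u*}, where H = {u* + t B : t ∈ ℝ}). Let {u_k} be the alternating projection sequence: u₀ ∈ H with u₀ ∉ K_{n+1}, and u_{k+1} is the unique nearest point of H to the unique nearest point of K_{n+1} to u_k. Write u_k = u* + t_k B with t_k ∈ ℝ. Then lim_{k→∞} ((1 − 2b²)/(√2 u_{*0})) · k^{1/2} |t_k| = 1. -/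

import Mathlib

/-- Euclidean norm of the tail `x₁` of `x = (x₀; x₁) ∈ ℝ × ℝⁿ`. -/
noncomputable def tailNorm {n : ℕ} (x : EuclideanSpace ℝ (Fin (n + 1))) : ℝ :=
  Real.sqrt (∑ i : Fin n, x i.succ ^ 2)

/-- The second-order cone `K_{n+1} = {(x₀; x₁) : ‖x₁‖ ≤ x₀}`. -/
def soc (n : ℕ) : Set (EuclideanSpace ℝ (Fin (n + 1))) :=
  {x | tailNorm x ≤ x 0}

/-- The boundary of the second-order cone: `{(x₀; x₁) : ‖x₁‖ = x₀}`. -/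
def socBd (n : ℕ) : Set (EuclideanSpace ℝ (Fin (n + 1))) :=
  {x | tailNorm x = x 0}

/-- The interior of the second-order cone: `{(x₀; x₁) : ‖x₁‖ < x₀}`. -/
def socInt (n : ℕ) : Set (EuclideanSpace ℝ (Fin (n + 1))) :=
  {x | tailNorm x < x 0}

/-- `x̂ = (x₀; −x₁)` for `x = (x₀; x₁)`. -/
def socHat {n : ℕ} (x : EuclideanSpace ℝ (Fin (n + 1))) : EuclideanSpace ℝ (Fin (n + 1)) :=
  WithLp.toLp 2 (fun i => if i = 0 then x 0 else -(x i))

/-- `B t` viewed as an element of Euclidean space. -/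
def mvE {m p : ℕ} (B : Matrix (Fin m) (Fin p) ℝ) (t : Fin p → ℝ) : EuclideanSpace ℝ (Fin m) :=
  WithLp.toLp 2 (fun i => B.mulVec t i)

/-- A Euclidean vector viewed as a plain function. -/
def toFun {m : ℕ} (x : EuclideanSpace ℝ (Fin m)) : Fin m → ℝ := x

open Filter Topology
open scoped RealInnerProductSpace

open Finset in

noncomputable def apxN (u0 b t : ℝ) : ℝ := Real.sqrt ((u0+t*b)^2 + (1-2*b^2)*t^2)
noncomputable def apxD (u0 b t : ℝ) : ℝ :=
  (1-2*b^2)*t*(t-2*b*u0)/(apxN u0 b t + (u0+t*b)) + 2*u0 + t*b*(3-2*b^2)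
noncomputable def apxJ (u0 b t : ℝ) : ℝ :=
  2*(1-b^2)/(apxN u0 b t + u0) - b*(3-2*b^2)*(2*b*u0+t*(1-b^2))/(apxN u0 b t + u0)^2
    - (1-2*b^2)/(apxN u0 b t + (u0+t*b))
    - 2*b^2*(1-2*b^2)*u0/((apxN u0 b t + (u0+t*b))*(apxN u0 b t + u0))
noncomputable def apxG (u0 b t : ℝ) : ℝ :=
  b*(((u0+t*b) + apxN u0 b t)/2 - u0)
    + (((u0+t*b) + apxN u0 b t)/(2*apxN u0 b t))*(b*u0+t*(1-b^2)) - b*u0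
noncomputable def apxP (u0 b t : ℝ) : ℝ :=
  apxJ u0 b t * (2*apxN u0 b t + apxD u0 b t)/(apxD u0 b t)^2

section lems
variable {u0 b : ℝ} (hu : 0 < u0) (hb : 2*b^2 < 1)

include hb in
lemma apxN_sq (t : ℝ) : (apxN u0 b t)^2 = (u0+t*b)^2 + (1-2*b^2)*t^2 := by
  rw [apxN, Real.sq_sqrt]; nlinarith [sq_nonneg (u0+t*b), sq_nonneg t]

include hu hb in
lemma apxN_pos (t : ℝ) : 0 < apxN u0 b t := by
  rw [apxN]
  apply Real.sqrt_pos.2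
  rcases eq_or_ne t 0 with h | h
  · subst h; simpa using by positivity
  · have h2 : 0 < t^2 := by positivity
    nlinarith [sq_nonneg (u0+t*b)]

include hu hb in
lemma apxNx_pos (t : ℝ) : 0 < apxN u0 b t + (u0+t*b) := by
  have hN := apxN_pos hu hb t
  have hN2 := apxN_sq (u0 := u0) hb t
  rcases eq_or_ne t 0 with h | h
  · subst h; simp only [mul_zero, zero_mul, add_zero]; linarith
  · have h2 : 0 < t^2 := by positivity
    nlinarith [sq_nonneg (apxN u0 b t - (u0+t*b))]

include hu hb in
lemma apxNu_pos (t : ℝ) : 0 < apxN u0 b t + u0 := by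
  have := apxN_pos hu hb t; linarith

lemma apx_polyA (s u0 b t : ℝ) (hs2 : s^2 = (u0+t*b)^2+(1-2*b^2)*t^2) :
    b*((u0+t*b)+s-2*u0)*s*(s+(u0+t*b)) + (s+(u0+t*b))^2*(b*u0+t*(1-b^2))
      - 2*b*u0*s*(s+(u0+t*b))
    = t*((1-2*b^2)*t*(t-2*b*u0) + (2*u0+t*b*(3-2*b^2))*(s+(u0+t*b))) := by
  linear_combination (t + b^2*t - u0*b + s*b) * hs2

lemma apx_polyB (s u0 b t : ℝ) (hs2 : s^2 = (u0+t*b)^2+(1-2*b^2)*t^2) :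
    (2*s - (2*u0+t*b*(3-2*b^2)))*((s+(u0+t*b))*(s+u0)^2)
      - (1-2*b^2)*t*(t-2*b*u0)*(s+u0)^2
    = t^2*( 2*(1-b^2)*((s+(u0+t*b))*(s+u0)) - b*(3-2*b^2)*(2*b*u0+t*(1-b^2))*(s+(u0+t*b))
        - (1-2*b^2)*(s+u0)^2 - 2*b^2*(1-2*b^2)*u0*(s+u0) ) := by
  linear_combination (-3*b^2*t^2 + 2*b^4*t^2 - u0*b*t + 2*u0*b^3*t + 2*u0^2 - s*b*t
    + 2*s*b^3*t + 4*s*u0 + 2*s^2) * hs2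

include hu hb in
lemma apxG_eq (t : ℝ) : apxG u0 b t = t * apxD u0 b t / (2 * apxN u0 b t) := by
  set s := apxN u0 b t with hs
  have hN := apxN_pos hu hb t
  have hNx := apxNx_pos hu hb t
  have hs2 := apxN_sq (u0 := u0) hb t
  have hne : (2*s*(s+(u0+t*b))) ≠ 0 := by positivity
  apply mul_right_cancel₀ hne
  have e1 : apxG u0 b t * (2*s*(s+(u0+t*b)))
      = b*((u0+t*b)+s-2*u0)*s*(s+(u0+t*b)) + (s+(u0+t*b))^2*(b*u0+t*(1-b^2))
        - 2*b*u0*s*(s+(u0+t*b)) := by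
    rw [apxG, ← hs]
    have hs0 : s ≠ 0 := hN.ne'
    field_simp
    ring
  have e2 : (t * apxD u0 b t / (2*s)) * (2*s*(s+(u0+t*b)))
      = t*((1-2*b^2)*t*(t-2*b*u0) + (2*u0+t*b*(3-2*b^2))*(s+(u0+t*b))) := by
    rw [apxD, ← hs]
    have hs0 : s ≠ 0 := hN.ne'
    have hsx : s + (u0+t*b) ≠ 0 := hNx.ne'
    field_simp
    ring
  rw [e1, e2]
  exact apx_polyA s u0 b t hs2

include hu hb in
lemma apx_keyB (t : ℝ) : 2*apxN u0 b t - apxD u0 b t = t^2 * apxJ u0 b t := by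
  set s := apxN u0 b t with hs
  have hN := apxN_pos hu hb t
  have hNx := apxNx_pos hu hb t
  have hNu := apxNu_pos hu hb t
  have hs2 := apxN_sq (u0 := u0) hb t
  have hne : ((s+(u0+t*b))*(s+u0)^2) ≠ 0 := by positivity
  apply mul_right_cancel₀ hne
  have e1 : (2*s - apxD u0 b t) * ((s+(u0+t*b))*(s+u0)^2)
      = (2*s - (2*u0+t*b*(3-2*b^2)))*((s+(u0+t*b))*(s+u0)^2)
        - (1-2*b^2)*t*(t-2*b*u0)*(s+u0)^2 := by
    rw [apxD, ← hs]
    have hsx : s + (u0+t*b) ≠ 0 := hNx.ne'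
    have hc : (1-2*b^2)*t*(t-2*b*u0)/(s+(u0+t*b)) * (s+(u0+t*b)) = (1-2*b^2)*t*(t-2*b*u0) :=
      div_mul_cancel₀ _ hsx
    linear_combination (-(s+u0)^2) * hc
  have e2 : (t^2 * apxJ u0 b t) * ((s+(u0+t*b))*(s+u0)^2)
      = t^2*( 2*(1-b^2)*((s+(u0+t*b))*(s+u0)) - b*(3-2*b^2)*(2*b*u0+t*(1-b^2))*(s+(u0+t*b))
        - (1-2*b^2)*(s+u0)^2 - 2*b^2*(1-2*b^2)*u0*(s+u0) ) := by
    rw [apxJ, ← hs]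
    have hsx : s + (u0+t*b) ≠ 0 := hNx.ne'
    have hsu : s + u0 ≠ 0 := hNu.ne'
    field_simp
  rw [e1, e2]
  exact apx_polyB s u0 b t hs2

include hu hb in
lemma apxP_eq (t : ℝ) (ht : t ≠ 0) (hD : apxD u0 b t ≠ 0) :
    1/(apxG u0 b t)^2 - 1/t^2 = apxP u0 b t := by
  have hN := apxN_pos hu hb t
  have hkey := apx_keyB hu hb t
  rw [apxG_eq hu hb t, apxP]
  have c1 : 1/(t * apxD u0 b t / (2 * apxN u0 b t))^2 - 1/t^2
      = ((2*apxN u0 b t - apxD u0 b t)*(2*apxN u0 b t + apxD u0 b t))/(t^2*(apxD u0 b t)^2) := by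
    field_simp
    ring
  rw [c1, hkey]
  field_simp
end lems

section cont
variable {u0 b : ℝ} (hu : 0 < u0) (hb : 2*b^2 < 1)

lemma apxN_cont : Continuous (apxN u0 b) := by
  apply Real.continuous_sqrt.comp; continuity

include hu in
lemma apxN_zero : apxN u0 b 0 = u0 := by
  simp [apxN, Real.sqrt_sq hu.le]

include hu in
lemma apxD_zero : apxD u0 b 0 = 2*u0 := by
  simp [apxD, apxN_zero hu]

include hu in
lemma apxD_contAt : ContinuousAt (apxD u0 b) 0 := by
  have hden : ContinuousAt (fun t => apxN u0 b t + (u0+t*b)) 0 := by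
    apply ContinuousAt.add apxN_cont.continuousAt (by fun_prop)
  have hdenne : (fun t => apxN u0 b t + (u0+t*b)) 0 ≠ 0 := by
    simp [apxN_zero hu]; linarith
  exact ((((by fun_prop : ContinuousAt (fun t : ℝ => (1-2*b^2)*t*(t-2*b*u0)) 0).div hden
    hdenne).add continuousAt_const).add (by fun_prop))

include hu in
lemma apxJ_contAt : ContinuousAt (apxJ u0 b) 0 := by
  have hN := apxN_cont (u0 := u0) (b := b)
  have h1 : ContinuousAt (fun t => apxN u0 b t + u0) 0 := by fun_prop
  have h1ne : (fun t => apxN u0 b t + u0) 0 ≠ 0 := by simp [apxN_zero hu]; linarith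
  have h2 : ContinuousAt (fun t => apxN u0 b t + (u0+t*b)) 0 := by fun_prop
  have h2ne : (fun t => apxN u0 b t + (u0+t*b)) 0 ≠ 0 := by simp [apxN_zero hu]; linarith
  apply ContinuousAt.sub
  apply ContinuousAt.sub
  apply ContinuousAt.sub
  · exact ContinuousAt.div (by fun_prop) h1 h1ne
  · exact ContinuousAt.div (by fun_prop) (h1.pow 2) (pow_ne_zero 2 h1ne)
  · exact ContinuousAt.div (by fun_prop) h2 h2ne
  · exact ContinuousAt.div (by fun_prop) (h2.mul h1) (mul_ne_zero h2ne h1ne)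

include hu in
lemma apxP_contAt : ContinuousAt (apxP u0 b) 0 := by
  have hDne : (fun t => apxD u0 b t) 0 ≠ 0 := by simp [apxD_zero hu]; linarith
  exact ContinuousAt.div ((apxJ_contAt hu).mul (by
      exact (apxN_cont.continuousAt.const_mul 2).add (apxD_contAt hu)))
    ((apxD_contAt hu).pow 2) (pow_ne_zero 2 hDne)

include hu in
lemma apxP_zero : apxP u0 b 0 = (1-2*b^2)^2/(2*u0^2) := by
  rw [apxP, apxJ, apxD, apxN_zero hu]
  have h0 : u0 ≠ 0 := ne_of_gt hu
  simp only [mul_zero, zero_mul, add_zero, zero_sub, sub_zero]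
  field_simp
  ring

include hu hb in
lemma apxG_cont : Continuous (apxG u0 b) := by
  have hN := apxN_cont (u0 := u0) (b := b)
  apply Continuous.sub _ continuous_const
  apply Continuous.add (by fun_prop)
  apply Continuous.mul _ (by fun_prop)
  exact Continuous.div (by fun_prop) (by fun_prop)
    (fun t => by have := apxN_pos hu hb t; positivity)
end cont

set_option maxHeartbeats 2000000 in
lemma apx_proj (n : ℕ) (B ustar : EuclideanSpace ℝ (Fin (n+1)))
    (hsB : (B 0)^2 + ∑ i : Fin n, (B i.succ)^2 = 1)
    (hsu : ∑ i : Fin n, (ustar i.succ)^2 = (ustar 0)^2)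
    (hso : ∑ i : Fin n, B i.succ * ustar i.succ = B 0 * ustar 0)
    (hu : 0 < ustar 0) (hb : 2*(B 0)^2 < 1) (tk : ℝ) (htk : tk ≠ 0) :
    ∃ p : EuclideanSpace ℝ (Fin (n+1)), p ∈ soc n ∧
      (∀ w ∈ soc n, ⟪(ustar + tk • B) - p, w - p⟫ ≤ 0) ∧
      ⟪B, p - ustar⟫ = apxG (ustar 0) (B 0) tk ∧ p ≠ ustar ∧ (ustar + tk • B) ∉ soc n := by
  classical
  set u0 := ustar 0 with hu0def
  set b := B 0 with hbdef
  clear_value u0 b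
  set N := apxN u0 b tk with hNdef
  set x := u0 + tk * b with hxdef
  set lam := (x + N)/(2*N) with hlamdef
  have hN : 0 < N := apxN_pos hu hb tk
  have hN2 : N^2 = x^2 + (1-2*b^2)*tk^2 := apxN_sq (u0 := u0) hb tk
  have hNx : 0 < N + x := apxNx_pos hu hb tk
  have hc : 0 < 1 - 2*b^2 := by linarith
  have ht2 : 0 < tk^2 := by positivity
  have hxN : x < N := by nlinarith [mul_pos hc ht2]
  have hlam : 0 < lam := by
    rw [hlamdef]; apply div_pos (by linarith) (by linarith)
  clear_value N x lam
  set p : EuclideanSpace ℝ (Fin (n+1)) :=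
    WithLp.toLp 2 (fun i => if i = 0 then (x + N)/2 else lam * (ustar i + tk * B i)) with hpdef
  have hp0 : p 0 = (x + N)/2 := by simp [hpdef]
  have hps : ∀ i : Fin n, p i.succ = lam * (ustar i.succ + tk * B i.succ) := by
    intro i; simp [hpdef, Fin.succ_ne_zero]
  -- coordinates of u' := ustar + tk • B
  have hU0 : (ustar + tk • B) 0 = x := by
    simp [hxdef, hu0def, hbdef, PiLp.add_apply, PiLp.smul_apply, smul_eq_mul]
  have hUs : ∀ i : Fin n, (ustar + tk • B) i.succ = ustar i.succ + tk * B i.succ := by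
    intro i; simp [PiLp.add_apply, PiLp.smul_apply, smul_eq_mul]
  -- sum identities
  have hsx1 : ∑ i : Fin n, (ustar i.succ + tk * B i.succ)^2 = N^2 := by
    have e : ∀ i ∈ (Finset.univ : Finset (Fin n)), (ustar i.succ + tk * B i.succ)^2
        = (ustar i.succ)^2 + (2*tk)*(B i.succ * ustar i.succ) + tk^2*(B i.succ)^2 := by
      intros; ring
    rw [Finset.sum_congr rfl e, Finset.sum_add_distrib, Finset.sum_add_distrib,
      ← Finset.mul_sum, ← Finset.mul_sum, hsu, hso, hN2, hxdef]
    linear_combination tk^2 * hsB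
  have hsBx1 : ∑ i : Fin n, B i.succ * (ustar i.succ + tk * B i.succ) = b*u0 + tk*(1-b^2) := by
    have e : ∀ i ∈ (Finset.univ : Finset (Fin n)), B i.succ * (ustar i.succ + tk * B i.succ)
        = B i.succ * ustar i.succ + tk * (B i.succ)^2 := by intros; ring
    rw [Finset.sum_congr rfl e, Finset.sum_add_distrib, ← Finset.mul_sum, hso]
    linear_combination tk * hsB
  -- tail norm of p
  have htp : tailNorm p = (x + N)/2 := by
    rw [tailNorm]
    have e : ∀ i ∈ (Finset.univ : Finset (Fin n)), (p i.succ)^2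
        = lam^2 * (ustar i.succ + tk * B i.succ)^2 := by
      intro i _; rw [hps i]; ring
    rw [Finset.sum_congr rfl e, ← Finset.mul_sum, hsx1,
      show lam^2*N^2 = (lam*N)^2 by ring, Real.sqrt_sq (by positivity)]
    rw [hlamdef]; field_simp
  have hpsoc : p ∈ soc n := by
    show tailNorm p ≤ p 0
    rw [htp, hp0]
  -- u' not in cone
  have hUnot : (ustar + tk • B) ∉ soc n := by
    intro hmem
    have : tailNorm (ustar + tk • B) ≤ (ustar + tk • B) 0 := hmem
    rw [hU0] at this
    have htU : tailNorm (ustar + tk • B) = N := by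
      rw [tailNorm]
      have e : ∀ i ∈ (Finset.univ : Finset (Fin n)), ((ustar + tk • B) i.succ)^2
          = (ustar i.succ + tk * B i.succ)^2 := by intro i _; rw [hUs i]
      rw [Finset.sum_congr rfl e, hsx1, Real.sqrt_sq hN.le]
    rw [htU] at this; linarith
  refine ⟨p, hpsoc, ?_, ?_, ?_, hUnot⟩
  · -- variational inequality
    intro w hw
    have hw' : tailNorm w ≤ w 0 := hw
    have hW0 : 0 ≤ tailNorm w := Real.sqrt_nonneg _
    have hW2 : (tailNorm w)^2 = ∑ i : Fin n, (w i.succ)^2 := Real.sq_sqrt (by positivity)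
    set W := tailNorm w with hWdef
    set S := ∑ i : Fin n, (ustar i.succ + tk * B i.succ) * w i.succ with hSdef
    have hCS : S^2 ≤ N^2 * W^2 := by
      rw [hW2, ← hsx1]; exact Finset.sum_mul_sq_le_sq_mul_sq _ _ _
    have hSle : S ≤ N * W := by nlinarith [mul_nonneg hN.le hW0]
    have hinner : ⟪(ustar + tk • B) - p, w - p⟫ = ((x-N)/(2*N)) * (N * w 0 - S) := by
      simp only [PiLp.inner_apply, RCLike.inner_apply, conj_trivial, PiLp.sub_apply]
      rw [Fin.sum_univ_succ, hU0, hp0]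
      have e : ∀ i ∈ (Finset.univ : Finset (Fin n)), (w i.succ - p i.succ) * ((ustar + tk • B) i.succ - p i.succ)
          = (1-lam) * ((ustar i.succ + tk * B i.succ) * w i.succ)
            - ((1-lam)*lam) * (ustar i.succ + tk * B i.succ)^2 := by
        intro i _; rw [hUs i, hps i]; ring
      rw [Finset.sum_congr rfl e, Finset.sum_sub_distrib, ← Finset.mul_sum, ← Finset.mul_sum,
        ← hSdef, hsx1, hlamdef]
      field_simp
      ring
    rw [hinner]
    apply mul_nonpos_of_nonpos_of_nonneg
    · apply div_nonpos_of_nonpos_of_nonneg (by linarith) (by linarith)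
    · have h1 : N * W ≤ N * w 0 := mul_le_mul_of_nonneg_left hw' hN.le
      linarith
  · -- inner product value
    simp only [PiLp.inner_apply, RCLike.inner_apply, conj_trivial, PiLp.sub_apply]
    rw [Fin.sum_univ_succ, hp0]
    have e : ∀ i ∈ (Finset.univ : Finset (Fin n)), (p i.succ - ustar i.succ) * B i.succ
        = lam * (B i.succ * (ustar i.succ + tk * B i.succ)) - B i.succ * ustar i.succ := by
      intro i _; rw [hps i]; ring
    rw [Finset.sum_congr rfl e, Finset.sum_sub_distrib, ← Finset.mul_sum, hsBx1, hso]
    rw [apxG, ← hNdef, ← hxdef, hlamdef, ← hbdef, ← hu0def]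
    ring
  · -- p ≠ ustar
    intro hpeq
    have h1 : ∀ i : Fin n, lam * tk * B i.succ = (1-lam) * ustar i.succ := by
      intro i
      have hthis := congrArg (fun q : EuclideanSpace ℝ (Fin (n+1)) => q i.succ) hpeq
      rw [hps i] at hthis
      linear_combination hthis
    have e1 : lam * tk * (b*u0) = (1-lam) * u0^2 := by
      rw [← hso, ← hsu, Finset.mul_sum, Finset.mul_sum]
      exact Finset.sum_congr rfl (fun i _ => by linear_combination (ustar i.succ) * h1 i)
    have e2 : (lam*tk)^2 * (1-b^2) = (1-lam)^2 * u0^2 := by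
      have hs : ∑ i : Fin n, (lam * tk * B i.succ)^2 = ∑ i : Fin n, ((1-lam) * ustar i.succ)^2 :=
        Finset.sum_congr rfl (fun i _ => by rw [h1 i])
      have hL : ∑ i : Fin n, (lam * tk * B i.succ)^2
          = (lam*tk)^2 * ∑ i : Fin n, (B i.succ)^2 := by
        rw [Finset.mul_sum]; exact Finset.sum_congr rfl (fun i _ => by ring)
      have hR : ∑ i : Fin n, ((1-lam) * ustar i.succ)^2
          = (1-lam)^2 * ∑ i : Fin n, (ustar i.succ)^2 := by
        rw [Finset.mul_sum]; exact Finset.sum_congr rfl (fun i _ => by ring)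
      rw [hL, hR, hsu] at hs
      have hB1 : ∑ i : Fin n, (B i.succ)^2 = 1 - b^2 := by linarith [hsB]
      rw [hB1] at hs; exact hs
    have e3 : (1-lam) * u0 = lam * tk * b := by
      have hu0ne : u0 ≠ 0 := ne_of_gt hu
      have h6 : ((1-lam) * u0) * u0 = (lam * tk * b) * u0 := by linear_combination -e1
      exact mul_right_cancel₀ hu0ne h6
    have e4 : (lam*tk)^2 * (1-2*b^2) = 0 := by
      linear_combination e2 + ((1-lam)*u0 + lam*tk*b) * e3
    have h5 : lam*tk ≠ 0 := mul_ne_zero (ne_of_gt hlam) htk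
    have h7 : 0 < (lam*tk)^2 := by positivity
    nlinarith [e4, h7, hc]


set_option maxHeartbeats 2000000 in
/-- Case 2 with `p = 1`: the alternating projection sequence `u_k = u* + t_k B` on the line
`H = {u* + t B : t ∈ ℝ}` satisfies `lim ((1 − 2b²)/(√2 u_{*0})) √k |t_k| = 1`. -/
theorem stmt13 (n : ℕ) (hn : 2 ≤ n)
    (B : EuclideanSpace ℝ (Fin (n + 1))) (hB : ‖B‖ = 1)
    (ustar : EuclideanSpace ℝ (Fin (n + 1))) (hustar : ustar ∈ socBd n)
    (hustar0 : 0 < ustar 0)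
    (horth : ⟪B, socHat ustar⟫ = 0) (hb : 2 * (B 0) ^ 2 < 1)
    (H : Set (EuclideanSpace ℝ (Fin (n + 1))))
    (hH : H = {u | ∃ t : ℝ, u = ustar + t • B})
    (u : ℕ → EuclideanSpace ℝ (Fin (n + 1)))
    (hu0H : u 0 ∈ H) (hu0K : u 0 ∉ soc n)
    (v : ℕ → EuclideanSpace ℝ (Fin (n + 1)))
    (hapm : ∀ k : ℕ, v k ∈ soc n ∧ (∀ w ∈ soc n, ‖u k - v k‖ ≤ ‖u k - w‖)
      ∧ u (k + 1) ∈ H ∧ (∀ w ∈ H, ‖v k - u (k + 1)‖ ≤ ‖v k - w‖))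
    (t : ℕ → ℝ) (ht : ∀ k, u k = ustar + t k • B) :
    Tendsto (fun k : ℕ =>
        ((1 - 2 * (B 0) ^ 2) / (Real.sqrt 2 * ustar 0)) * Real.sqrt k * |t k|)
      atTop (𝓝 1) := by
  classical
  have hcone_star : ustar ∈ soc n := le_of_eq hustar
  have hu : 0 < ustar 0 := hustar0
  have hc0 : 0 < 1 - 2*(B 0)^2 := by linarith
  have hsB : (B 0)^2 + ∑ i : Fin n, (B i.succ)^2 = 1 := by
    have h1 : ‖B‖^2 = 1 := by rw [hB]; norm_num
    rw [EuclideanSpace.norm_eq, Real.sq_sqrt (by positivity)] at h1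
    simp only [Real.norm_eq_abs, sq_abs] at h1
    rw [Fin.sum_univ_succ] at h1
    exact h1
  have hsu : ∑ i : Fin n, (ustar i.succ)^2 = (ustar 0)^2 := by
    have h1 : Real.sqrt (∑ i : Fin n, ustar i.succ ^ 2) = ustar 0 := hustar
    have h2 := Real.sq_sqrt (show 0 ≤ ∑ i : Fin n, (ustar i.succ)^2 by positivity)
    rw [h1] at h2
    exact h2.symm
  have hso : ∑ i : Fin n, B i.succ * ustar i.succ = B 0 * ustar 0 := by
    have h1 := horth
    simp only [PiLp.inner_apply, RCLike.inner_apply, conj_trivial] at h1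
    rw [Fin.sum_univ_succ] at h1
    simp [socHat, Fin.succ_ne_zero, mul_neg, Finset.sum_neg_distrib] at h1
    have hcomm := Finset.sum_congr rfl
      (fun i (_ : i ∈ (Finset.univ : Finset (Fin n))) => mul_comm (ustar i.succ) (B i.succ))
    linarith
  -- step lemma: for any nonzero s, g s ≠ 0 and |g s| < |s|
  have hstep : ∀ s : ℝ, s ≠ 0 →
      apxG (ustar 0) (B 0) s ≠ 0 ∧ |apxG (ustar 0) (B 0) s| < |s| := by
    intro s hs
    obtain ⟨p, hpK, hVI, hGv, hpne, hUnot⟩ := apx_proj n B ustar hsB hsu hso hu hb s hs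
    have hpu : 0 < ‖p - ustar‖ := by
      rw [norm_pos_iff, sub_ne_zero]; exact hpne
    have hVIu : ⟪(ustar + s • B) - p, ustar - p⟫ ≤ 0 := hVI ustar hcone_star
    have hexp : ⟪(ustar + s • B) - p, ustar - p⟫
        = -⟪(ustar + s • B) - ustar, p - ustar⟫ + ‖p - ustar‖^2 := by
      rw [show (ustar + s • B) - p = ((ustar + s • B) - ustar) - (p - ustar) by abel,
        show ustar - p = -(p - ustar) by abel, inner_neg_right, inner_sub_left,
        real_inner_self_eq_norm_sq]
      ring
    have hsimp : ⟪(ustar + s • B) - ustar, p - ustar⟫ = s * ⟪B, p - ustar⟫ := by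
      rw [add_sub_cancel_left, real_inner_smul_left]
    have hkey : ‖p - ustar‖^2 ≤ s * apxG (ustar 0) (B 0) s := by
      rw [← hGv, ← hsimp]; linarith [hVIu, hexp ▸ hVIu, hexp]
    have habs : |apxG (ustar 0) (B 0) s| ≤ ‖p - ustar‖ := by
      calc |apxG (ustar 0) (B 0) s| = |⟪B, p - ustar⟫| := by rw [hGv]
        _ ≤ ‖B‖ * ‖p - ustar‖ := abs_real_inner_le_norm _ _
        _ = ‖p - ustar‖ := by rw [hB, one_mul]
    have hnorm_u' : ‖(ustar + s • B) - ustar‖ = |s| := by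
      rw [add_sub_cancel_left, norm_smul, hB]
      simp [Real.norm_eq_abs]
    have hpls : ‖p - ustar‖ ≤ |s| := by
      have hCS2 : ⟪(ustar + s • B) - ustar, p - ustar⟫
          ≤ ‖(ustar + s • B) - ustar‖ * ‖p - ustar‖ := real_inner_le_norm _ _
      rw [hnorm_u', hsimp, hGv] at hCS2
      nlinarith [hkey, hpu]
    have hne0 : apxG (ustar 0) (B 0) s ≠ 0 := by
      intro h0
      rw [h0, mul_zero] at hkey
      nlinarith [hpu]
    refine ⟨hne0, ?_⟩
    rcases eq_or_lt_of_le (le_trans habs hpls) with heq | hlt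
    · exfalso
      have h1 : ‖p - ustar‖ = |s| := le_antisymm hpls (heq ▸ habs)
      have hkey' : s^2 ≤ s * apxG (ustar 0) (B 0) s := by
        rw [← sq_abs, ← h1]; exact hkey
      have h2 : s * apxG (ustar 0) (B 0) s ≤ s^2 := by
        calc s * apxG (ustar 0) (B 0) s ≤ |s * apxG (ustar 0) (B 0) s| := le_abs_self _
          _ = |s| * |apxG (ustar 0) (B 0) s| := abs_mul _ _
          _ = |s| * |s| := by rw [heq]
          _ = s^2 := by rw [← sq_abs]; ring
      have hie : s * apxG (ustar 0) (B 0) s = s^2 := le_antisymm h2 hkey'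
      have hzero : ‖(ustar + s • B) - p‖^2 = 0 := by
        rw [show (ustar + s • B) - p = ((ustar + s • B) - ustar) - (p - ustar) by abel,
          norm_sub_sq_real, hnorm_u', hsimp, hGv, hie, h1, sq_abs]
        ring
      have : (ustar + s • B) = p := by
        have h3 : ‖(ustar + s • B) - p‖ = 0 := by
          have := norm_nonneg ((ustar + s • B) - p); nlinarith
        rwa [norm_eq_zero, sub_eq_zero] at h3
      exact hUnot (this ▸ hpK)
    · exact hlt
  -- identification of the iteration: t (k+1) = g (t k)
  have hmain : ∀ k : ℕ, t k ≠ 0 → t (k+1) = apxG (ustar 0) (B 0) (t k) := by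
    intro k hk
    obtain ⟨p, hpK, hVI, hGv, hpne, hUnot⟩ := apx_proj n B ustar hsB hsu hso hu hb (t k) hk
    have huk : u k = ustar + (t k) • B := ht k
    obtain ⟨hvK, hvmin, hukH, hlmin⟩ := hapm k
    have hle : ‖u k - v k‖ ≤ ‖u k - p‖ := hvmin p hpK
    have hVIv : ⟪u k - p, v k - p⟫ ≤ 0 := by rw [huk]; exact hVI (v k) hvK
    have hexp : ‖u k - v k‖^2 = ‖u k - p‖^2 - 2*⟪u k - p, v k - p⟫ + ‖v k - p‖^2 := by
      rw [show u k - v k = (u k - p) - (v k - p) by abel, norm_sub_sq_real]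
    have hvp : v k = p := by
      have h2 : ‖v k - p‖^2 ≤ 0 := by
        nlinarith [norm_nonneg (u k - v k), norm_nonneg (u k - p), hle]
      have h3 : ‖v k - p‖ = 0 := by nlinarith [norm_nonneg (v k - p), sq_nonneg ‖v k - p‖]
      rwa [norm_eq_zero, sub_eq_zero] at h3
    set s := ⟪B, v k - ustar⟫ with hsdef
    have hqH : ustar + s • B ∈ H := by rw [hH]; exact ⟨s, rfl⟩
    have horthvq : ⟪v k - (ustar + s • B), B⟫ = 0 := by
      rw [show v k - (ustar + s • B) = (v k - ustar) - s • B by abel, inner_sub_left,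
        real_inner_smul_left, real_inner_self_eq_norm_sq, hB, real_inner_comm, ← hsdef]
      ring
    have hdist : ∀ r : ℝ, ‖v k - (ustar + r • B)‖^2
        = ‖v k - (ustar + s • B)‖^2 + (s - r)^2 := by
      intro r
      have hdecomp : v k - (ustar + r • B) = (v k - (ustar + s • B)) + (s - r) • B := by
        rw [sub_smul]; abel
      rw [hdecomp, norm_add_sq_real, real_inner_smul_right, horthvq, norm_smul, hB]
      simp [Real.norm_eq_abs, sq_abs]
    have hle2 : ‖v k - u (k+1)‖ ≤ ‖v k - (ustar + s • B)‖ := hlmin _ hqH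
    have heq : t (k+1) = s := by
      have h1 := hdist (t (k+1))
      rw [← ht (k+1)] at h1
      have hd : (s - t (k+1))^2 ≤ 0 := by
        nlinarith [norm_nonneg (v k - u (k+1)), norm_nonneg (v k - (ustar + s • B)), hle2]
      have : s - t (k+1) = 0 := by nlinarith [sq_nonneg (s - t (k+1))]
      linarith
    rw [heq, hsdef, hvp, hGv]
  -- basic orbit facts
  have ht0 : t 0 ≠ 0 := by
    intro h0
    apply hu0K
    have : u 0 = ustar := by rw [ht 0, h0]; simp
    rw [this]; exact hcone_star
  have htk : ∀ k, t k ≠ 0 := by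
    intro k
    induction k with
    | zero => exact ht0
    | succ k ih => rw [hmain k ih]; exact (hstep (t k) ih).1
  have hrec : ∀ k, t (k+1) = apxG (ustar 0) (B 0) (t k) := fun k => hmain k (htk k)
  have hdec : ∀ k, |t (k+1)| < |t k| := fun k => by
    rw [hrec k]; exact (hstep (t k) (htk k)).2
  -- |t k| tends to 0
  have hanti : Antitone (fun k => |t k|) := antitone_nat_of_succ_le (fun k => (hdec k).le)
  have hbdd : BddBelow (Set.range (fun k => |t k|)) := by
    refine ⟨0, ?_⟩; rintro y ⟨k, rfl⟩; positivity
  have hlim : Tendsto (fun k => |t k|) atTop (𝓝 (⨅ k, |t k|)) := tendsto_atTop_ciInf hanti hbdd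
  set L := ⨅ k, |t k| with hLdef
  have hL0 : 0 ≤ L := le_ciInf (fun k => abs_nonneg _)
  have hLzero : L = 0 := by
    by_contra hne
    have hLpos : 0 < L := lt_of_le_of_ne hL0 (Ne.symm hne)
    have hbound : ∀ k, t k ∈ Set.Icc (-(|t 0|)) (|t 0|) := by
      intro k
      have : |t k| ≤ |t 0| := hanti (Nat.zero_le k)
      exact ⟨by linarith [neg_abs_le (t k)], by linarith [le_abs_self (t k)]⟩
    obtain ⟨τ, -, φ, hφmono, hφtend⟩ :=
      tendsto_subseq_of_bounded (Metric.isBounded_Icc (-(|t 0|)) (|t 0|)) hbound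
    have h1 : Tendsto (fun j => |t (φ j)|) atTop (𝓝 L) := hlim.comp hφmono.tendsto_atTop
    have hτabs : |τ| = L :=
      tendsto_nhds_unique ((continuous_abs.tendsto τ).comp hφtend) h1
    have hτne : τ ≠ 0 := by
      intro h; rw [h, abs_zero] at hτabs; exact hne hτabs.symm
    have h2 : Tendsto (fun j => t (φ j + 1)) atTop (𝓝 (apxG (ustar 0) (B 0) τ)) := by
      have hgc : Continuous (apxG (ustar 0) (B 0)) := apxG_cont hu hb
      have h2' := (hgc.tendsto τ).comp hφtend
      apply h2'.congr
      intro j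
      exact (hrec (φ j)).symm
    have h3 : Tendsto (fun j => |t (φ j + 1)|) atTop (𝓝 L) := by
      have hφ1 : Tendsto (fun j => φ j + 1) atTop atTop :=
        (tendsto_add_atTop_nat 1).comp hφmono.tendsto_atTop
      exact hlim.comp hφ1
    have h4 : |apxG (ustar 0) (B 0) τ| = L :=
      tendsto_nhds_unique ((continuous_abs.tendsto _).comp h2) h3
    have h5 := (hstep τ hτne).2
    rw [h4, hτabs] at h5
    exact lt_irrefl _ h5
  have htzero : Tendsto t atTop (𝓝 0) := by
    rw [tendsto_zero_iff_abs_tendsto_zero]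
    rw [hLzero] at hlim
    exact hlim
  -- telescoping and Cesàro
  set A := (1-2*(B 0)^2)^2/(2*(ustar 0)^2) with hAdef
  have hApos : 0 < A := by
    rw [hAdef]; exact div_pos (pow_pos hc0 2) (by positivity)
  have hDk : ∀ k, apxD (ustar 0) (B 0) (t k) ≠ 0 := by
    intro k hD0
    have hgne := (hstep (t k) (htk k)).1
    rw [apxG_eq hu hb (t k), hD0] at hgne
    simp at hgne
  have hΦ : ∀ k, 1/(t (k+1))^2 - 1/(t k)^2 = apxP (ustar 0) (B 0) (t k) := by
    intro k
    rw [hrec k]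
    exact apxP_eq hu hb (t k) (htk k) (hDk k)
  have hsumtel : ∀ k, 1/(t k)^2
      = 1/(t 0)^2 + ∑ i ∈ Finset.range k, apxP (ustar 0) (B 0) (t i) := by
    intro k
    induction k with
    | zero => simp
    | succ k ih =>
      rw [Finset.sum_range_succ]
      have := hΦ k
      linarith
  have hPtend : Tendsto (fun k => apxP (ustar 0) (B 0) (t k)) atTop (𝓝 A) := by
    have hcont := (apxP_contAt hu (b := B 0)).tendsto
    rw [apxP_zero hu, ← hAdef] at hcont
    exact hcont.comp htzero
  have hces := hPtend.cesaro
  have hinv : Tendsto (fun k : ℕ => (k:ℝ)⁻¹ * (1/(t k)^2)) atTop (𝓝 A) := by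
    have h0 : Tendsto (fun k : ℕ => (k:ℝ)⁻¹ * (1/(t 0)^2)) atTop (𝓝 0) := by
      have := tendsto_inv_atTop_nhds_zero_nat.mul_const (1/(t 0)^2)
      rw [zero_mul] at this
      exact this
    have hadd := h0.add hces
    rw [zero_add] at hadd
    apply hadd.congr
    intro k
    rw [hsumtel k]
    ring
  have hktk : Tendsto (fun k : ℕ => (k:ℝ) * (t k)^2) atTop (𝓝 A⁻¹) := by
    have h1 := hinv.inv₀ (ne_of_gt hApos)
    apply h1.congr'
    filter_upwards [eventually_ge_atTop 1] with k hk
    have hkne : (k:ℝ) ≠ 0 := Nat.cast_ne_zero.2 (by omega)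
    have htne : (t k)^2 ≠ 0 := pow_ne_zero 2 (htk k)
    field_simp
  have hsq : Tendsto (fun k : ℕ => Real.sqrt ((k:ℝ) * (t k)^2)) atTop (𝓝 (Real.sqrt A⁻¹)) :=
    (Real.continuous_sqrt.tendsto _).comp hktk
  have hfin : Tendsto (fun k : ℕ => Real.sqrt k * |t k|) atTop (𝓝 (Real.sqrt A⁻¹)) := by
    apply hsq.congr
    intro k
    rw [Real.sqrt_mul (Nat.cast_nonneg k), Real.sqrt_sq_eq_abs]
  have hval : Real.sqrt A⁻¹ = Real.sqrt 2 * (ustar 0) / (1-2*(B 0)^2) := by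
    have h2 : A⁻¹ = (Real.sqrt 2 * ustar 0/(1-2*(B 0)^2))^2 := by
      rw [hAdef, div_pow, mul_pow, Real.sq_sqrt (by norm_num : (0:ℝ) ≤ 2)]
      rw [inv_div]
    rw [h2, Real.sqrt_sq (by positivity)]
  have hfinal := hfin.const_mul ((1-2*(B 0)^2)/(Real.sqrt 2 * ustar 0))
  rw [hval] at hfinal
  have hsqrt2 : (0:ℝ) < Real.sqrt 2 := Real.sqrt_pos.2 (by norm_num)
  have hconst : (1-2*(B 0)^2)/(Real.sqrt 2 * ustar 0) * (Real.sqrt 2 * ustar 0/(1-2*(B 0)^2))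
      = 1 := by
    field_simp
  rw [hconst] at hfinal
  apply hfinal.congr
  intro k
  ring
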